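/- Let S ⊆ ℤ^r be finite and nonempty, a_s ∈ K[n]\{0} for s ∈ S, and f ∈ K[n]. If there is a corner point p of S whose coefficient a_p has no aperiodic irreducible factor (i.e., the aperiodic part of a_p is a constant), then the aperiodic part of the denominator (in lowest terms) of any rational solution y ∈ K(n) of the PLDE ∑_{s∈S} a_s N^s y = f is 1 (a unit). -/

import Mathlib

open MvPolynomial

/-- The substitution homomorphism `n_j ↦ n_j + i_j` on `K[n₁,…,n_r]`. -/
noncomputable def mShiftHom (K : Type*) [Field K] {r : ℕ} (i : Fin r → ℤ) :
    MvPolynomial (Fin r) K →ₐ[K] MvPolynomial (Fin r) K :=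
  aeval (fun j => X j + C (i j : K))

/-- The shift automorphism `N^i` of `K[n₁,…,n_r]`, determined by `n_j ↦ n_j + i_j`. -/
noncomputable def mShift (K : Type*) [Field K] {r : ℕ} (i : Fin r → ℤ) :
    MvPolynomial (Fin r) K ≃ₐ[K] MvPolynomial (Fin r) K :=
  AlgEquiv.ofAlgHom (mShiftHom K i) (mShiftHom K (-i))
    (by apply MvPolynomial.algHom_ext; intro j; simp [mShiftHom])
    (by apply MvPolynomial.algHom_ext; intro j; simp [mShiftHom])

/-- `Spread(p,q) = { i ∈ ℤ^r : gcd(p, N^i q) ≠ 1 }`, where `gcd ≠ 1` (not a unit)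
is expressed as `¬ IsRelPrime`. -/
def mSpread {K : Type*} [Field K] {r : ℕ} (p q : MvPolynomial (Fin r) K) :
    Set (Fin r → ℤ) :=
  {i | ¬ IsRelPrime p (mShift K i q)}

section Helpers
variable {K : Type*} [Field K] {r : ℕ}

lemma mShiftHom_comp (i j : Fin r → ℤ) :
    (mShiftHom K i).comp (mShiftHom K j) = mShiftHom K (i + j) := by
  apply MvPolynomial.algHom_ext; intro l
  simp [mShiftHom]
  ring

lemma mShift_comp (i j : Fin r → ℤ) (x : MvPolynomial (Fin r) K) :
    mShift K i (mShift K j x) = mShift K (i + j) x := by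
  have h := congrArg (fun φ => DFunLike.coe φ x) (mShiftHom_comp (K := K) i j)
  exact h

lemma mShift_zero (x : MvPolynomial (Fin r) K) : mShift K (0 : Fin r → ℤ) x = x := by
  have h : mShiftHom K (0 : Fin r → ℤ) = AlgHom.id K _ := by
    apply MvPolynomial.algHom_ext; intro l; simp [mShiftHom]
  show mShiftHom K (0 : Fin r → ℤ) x = x
  rw [h]; rfl

lemma mShift_cancel (i : Fin r → ℤ) (x : MvPolynomial (Fin r) K) :
    mShift K (-i) (mShift K i x) = x := by
  rw [mShift_comp, neg_add_cancel, mShift_zero]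

lemma mShift_ne_zero {x : MvPolynomial (Fin r) K} (i : Fin r → ℤ) (hx : x ≠ 0) :
    mShift K i x ≠ 0 := by
  intro h
  apply hx
  have := congrArg (mShift K (-i)) h
  rwa [mShift_cancel, map_zero] at this

lemma mShift_irreducible_iff (i : Fin r → ℤ) {x : MvPolynomial (Fin r) K} :
    Irreducible (mShift K i x) ↔ Irreducible x :=
  MulEquiv.irreducible_iff (mShift K i)

lemma not_isRelPrime_iff {d x : MvPolynomial (Fin r) K} (hd : Irreducible d) :
    ¬ IsRelPrime d x ↔ d ∣ x := by
  constructor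
  · intro h
    by_contra hdvd
    apply h
    intro c hcd hcx
    obtain ⟨t, ht⟩ := hcd
    rcases hd.isUnit_or_isUnit ht with hc | htu
    · exact hc
    · exfalso
      apply hdvd
      obtain ⟨tu, rfl⟩ := htu
      exact dvd_trans ⟨(tu⁻¹ : _), by rw [ht, Units.mul_inv_cancel_right]⟩ hcx
  · intro hdvd h
    exact hd.not_isUnit (h dvd_rfl hdvd)

lemma mem_mSpread_iff {d x : MvPolynomial (Fin r) K} (hd : Irreducible d) (i : Fin r → ℤ) :
    i ∈ mSpread d x ↔ d ∣ mShift K i x := by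
  rw [mSpread, Set.mem_setOf_eq, not_isRelPrime_iff hd]

lemma isUnit_mShift_iff (i : Fin r → ℤ) {x : MvPolynomial (Fin r) K} :
    IsUnit (mShift K i x) ↔ IsUnit x := by
  constructor
  · intro h
    have := h.map (mShift K (-i))
    rwa [mShift_cancel] at this
  · exact fun h => h.map _

lemma mShift_dvd_iff (i : Fin r → ℤ) {x y : MvPolynomial (Fin r) K} :
    mShift K i x ∣ mShift K i y ↔ x ∣ y := by
  constructor
  · intro h
    have := map_dvd (mShift K (-i)) h
    rwa [mShift_cancel, mShift_cancel] at this
  · exact fun h => map_dvd _ h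

lemma isRelPrime_mShift_iff (j : Fin r → ℤ) {x y : MvPolynomial (Fin r) K} :
    IsRelPrime (mShift K j x) (mShift K j y) ↔ IsRelPrime x y := by
  constructor
  · intro h c hcx hcy
    have := h (map_dvd (mShift K j) hcx) (map_dvd (mShift K j) hcy)
    rwa [isUnit_mShift_iff] at this
  · intro h c hcx hcy
    have h1 := map_dvd (mShift K (-j)) hcx
    have h2 := map_dvd (mShift K (-j)) hcy
    rw [mShift_cancel] at h1 h2
    have := h h1 h2
    rwa [isUnit_mShift_iff] at this

lemma mSpread_mShift (j : Fin r → ℤ) (d : MvPolynomial (Fin r) K) :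
    mSpread (mShift K j d) (mShift K j d) = mSpread d d := by
  ext i
  simp only [mSpread, Set.mem_setOf_eq, not_iff_not]
  rw [mShift_comp, show i + j = j + i from add_comm i j, ← mShift_comp,
    isRelPrime_mShift_iff]

lemma mSpread_finite_of_irreducible {d e : MvPolynomial (Fin r) K}
    (hd : Irreducible d) (hfin : (mSpread d d).Finite) (he : Irreducible e) :
    (mSpread d e).Finite := by
  rcases Set.eq_empty_or_nonempty (mSpread d e) with h | ⟨i₀, hi₀⟩
  · rw [h]; exact Set.finite_empty
  · rw [mem_mSpread_iff hd] at hi₀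
    apply Set.Finite.subset ((hfin.image (· + i₀)))
    intro i hi
    rw [mem_mSpread_iff hd] at hi
    refine ⟨i - i₀, ?_, by simp⟩
    rw [mem_mSpread_iff hd]
    -- d ∣ σ_i e and σ_{i₀} e ∣ d (associated), so d ∣ σ_i e = σ_{i-i₀}(σ_{i₀} e) ∣ σ_{i-i₀} d
    have hassoc : Associated d (mShift K i₀ e) :=
      hd.associated_of_dvd ((mShift_irreducible_iff i₀).mpr he) hi₀
    have h1 : mShift K (i - i₀) (mShift K i₀ e) ∣ mShift K (i - i₀) d :=
      map_dvd _ hassoc.symm.dvd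
    rw [mShift_comp, sub_add_cancel] at h1
    exact dvd_trans hi h1

lemma mSpread_finite_of_aperiodic {d : MvPolynomial (Fin r) K} (hd : Irreducible d)
    (hfin : (mSpread d d).Finite) :
    ∀ b : MvPolynomial (Fin r) K, b ≠ 0 → (mSpread d b).Finite := by
  intro b
  refine UniqueFactorizationMonoid.induction_on_prime
    (P := fun b => b ≠ 0 → (mSpread d b).Finite) b
    (fun h => absurd rfl h) (fun u hu _ => ?_) (fun b' e hb' he ih _ => ?_)
  · apply Set.Finite.subset Set.finite_empty
    intro i hi
    rw [mem_mSpread_iff hd] at hi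
    exact absurd (isUnit_of_dvd_unit hi (hu.map (mShift K i))) hd.not_isUnit
  · have hdp : Prime d := UniqueFactorizationMonoid.irreducible_iff_prime.mp hd
    apply Set.Finite.subset ((mSpread_finite_of_irreducible hd hfin he.irreducible).union (ih hb'))
    intro i hi
    rw [mem_mSpread_iff hd, map_mul] at hi
    rcases hdp.dvd_mul.mp hi with h | h
    · exact Or.inl ((mem_mSpread_iff hd i).mpr h)
    · exact Or.inr ((mem_mSpread_iff hd i).mpr h)

end Helpers

private lemma mul_div_mul_cancel_aux {F : Type*} [Field F] (a n t P : F) (ht : t ≠ 0) :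
    a * (n / t) * (t * P) = a * n * P := by
  field_simp

/-- The canonical embedding of `K[n₁,…,n_r]` into its fraction field `K(n₁,…,n_r)`. -/
noncomputable def toFrac (K : Type*) [Field K] {r : ℕ} :
    MvPolynomial (Fin r) K →+* FractionRing (MvPolynomial (Fin r) K) :=
  algebraMap _ _

/-- The shift automorphism `N^i` extended to the fraction field `K(n₁,…,n_r)`. -/
noncomputable def fShift (K : Type*) [Field K] {r : ℕ} (i : Fin r → ℤ) :
    FractionRing (MvPolynomial (Fin r) K) ≃+* FractionRing (MvPolynomial (Fin r) K) :=
  IsFractionRing.ringEquivOfRingEquiv (mShift K i).toRingEquiv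

/-- **Corollary.**  If there is a corner point `p` of `S` whose coefficient `a_p` has no
aperiodic irreducible factor (i.e. the aperiodic part `a'_p` of `a_p` is a constant),
then the aperiodic part of the denominator (in lowest terms) of any rational solution
of the PLDE is `1` (a unit). -/
theorem aperiodic_denominator_trivial_of_constant_aperiodic_part
    {K : Type*} [Field K] [CharZero K] {r : ℕ}
    (S : Finset (Fin r → ℤ)) (hS : S.Nonempty)
    (a : (Fin r → ℤ) → MvPolynomial (Fin r) K) (ha : ∀ w ∈ S, a w ≠ 0)
    (f : MvPolynomial (Fin r) K)
    (p : Fin r → ℤ) (hp : p ∈ S)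
    (hcorner : ∃ v : Fin r → ℝ, v ≠ 0 ∧
      ∀ w ∈ S, w ≠ p → 0 < ∑ l, v l * ((w l - p l : ℤ) : ℝ))
    (up' ap' : MvPolynomial (Fin r) K)
    (hfact : a p = up' * ap')
    (hup' : ∀ d, Irreducible d → d ∣ up' → (mSpread d d).Infinite)
    (hap' : ∀ d, Irreducible d → d ∣ ap' → (mSpread d d).Finite)
    (hconst : ∃ c : K, ap' = C c) :
    ∀ (y : FractionRing (MvPolynomial (Fin r) K))
      (pnum u q : MvPolynomial (Fin r) K),
      (∑ w ∈ S, toFrac K (a w) * fShift K w y = toFrac K f) →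
      u * q ≠ 0 →
      y = toFrac K pnum / toFrac K (u * q) →
      IsRelPrime pnum (u * q) →
      (∀ d, Irreducible d → d ∣ u → (mSpread d d).Infinite) →
      (∀ d, Irreducible d → d ∣ q → (mSpread d d).Finite) →
      IsUnit q := by
  intro y pnum u q heq hbne hy hrel hu hq
  by_contra hqnu
  set b := u * q with hbdef
  have hqne : q ≠ 0 := right_ne_zero_of_mul hbne
  obtain ⟨d, hdirr, hdq⟩ := WfDvdMonoid.exists_irreducible_factor hqnu hqne
  have hdfin : (mSpread d d).Finite := hq d hdirr hdq
  obtain ⟨v, hv0, hv⟩ := hcorner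
  have hinj : Function.Injective (toFrac K (r := r)) :=
    IsFractionRing.injective _ _
  have hfs : ∀ (i : Fin r → ℤ) (x : MvPolynomial (Fin r) K),
      fShift K i (toFrac K x) = toFrac K (mShift K i x) := by
    intro i x
    simpa [toFrac, fShift] using
      IsFractionRing.ringEquivOfRingEquiv_algebraMap (mShift K i).toRingEquiv x
  have hφne : ∀ x : MvPolynomial (Fin r) K, x ≠ 0 → toFrac K x ≠ 0 := by
    intro x hx h
    exact hx (hinj (by rw [h, map_zero]))
  have hDne : ∀ w : Fin r → ℤ, toFrac K (mShift K w b) ≠ 0 :=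
    fun w => hφne _ (mShift_ne_zero w hbne)
  -- the polynomial form of the equation
  have key : ∑ w ∈ S, a w * mShift K w pnum * ∏ w' ∈ S.erase w, mShift K w' b
      = f * ∏ w ∈ S, mShift K w b := by
    apply hinj
    rw [map_sum, map_mul, map_prod]
    calc ∑ w ∈ S, toFrac K (a w * mShift K w pnum * ∏ w' ∈ S.erase w, mShift K w' b)
        = ∑ w ∈ S, toFrac K (a w) * fShift K w y *
            ∏ w' ∈ S, toFrac K (mShift K w' b) := by
          refine Finset.sum_congr rfl fun w hw => ?_
          rw [map_mul, map_mul, map_prod, hy, map_div₀, hfs, hfs,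
            ← Finset.mul_prod_erase S (fun w' => toFrac K (mShift K w' b)) hw]
          exact (mul_div_mul_cancel_aux _ _ _ _ (hDne w)).symm
      _ = toFrac K f * ∏ w' ∈ S, toFrac K (mShift K w' b) := by
          rw [← Finset.sum_mul, heq]
  -- the linear functional and the maximal spread element
  set lam : (Fin r → ℤ) → ℝ := fun i => ∑ l, v l * (i l : ℝ) with hlam
  have hlam_add : ∀ x y : Fin r → ℤ, lam (x + y) = lam x + lam y := by
    intro x y
    simp only [hlam, Pi.add_apply, Int.cast_add, mul_add, Finset.sum_add_distrib]
  have hTfin : (mSpread d b).Finite := mSpread_finite_of_aperiodic hdirr hdfin b hbne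
  have hT0 : (0 : Fin r → ℤ) ∈ mSpread d b := by
    rw [mem_mSpread_iff hdirr, mShift_zero]
    exact hdq.trans (dvd_mul_left q u)
  obtain ⟨m, hmT, hmax0⟩ :=
    Set.exists_max_image (mSpread d b) lam hTfin ⟨0, hT0⟩
  have hmax : ∀ a' ∈ mSpread d b, lam m ≤ lam a' → lam m = lam a' :=
    fun a' ha' h => le_antisymm h (hmax0 a' ha')
  have hm : d ∣ mShift K m b := (mem_mSpread_iff hdirr m).mp hmT
  set d' := mShift K (p - m) d with hd'def
  have hd'irr : Irreducible d' := (mShift_irreducible_iff _).mpr hdirr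
  have hd'p : Prime d' := UniqueFactorizationMonoid.irreducible_iff_prime.mp hd'irr
  -- d' divides the denominator shifted by p
  have hB : d' ∣ mShift K p b := by
    have h1 := map_dvd (mShift K (p - m)) hm
    rwa [mShift_comp, sub_add_cancel] at h1
  -- d' divides no other shifted denominator
  have hA : ∀ w ∈ S, w ≠ p → ¬ d' ∣ mShift K w b := by
    intro w hw hwp hdvd
    have h1 := map_dvd (mShift K (m - p)) hdvd
    rw [hd'def, mShift_comp, mShift_comp,
      show m - p + (p - m) = (0 : Fin r → ℤ) by ring, mShift_zero] at h1
    have hmem : (m - p + w) ∈ mSpread d b := (mem_mSpread_iff hdirr _).mpr h1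
    have hpos : 0 < lam (w - p) := by
      have := hv w hw hwp
      simpa [hlam, Pi.sub_apply] using this
    have hsum : lam (m - p + w) = lam m + lam (w - p) := by
      rw [show m - p + w = m + (w - p) by ring, hlam_add]
    have := hmax _ hmem (by linarith)
    linarith [this]
  -- extract the term at p
  have hgS : d' ∣ ∑ w ∈ S, a w * mShift K w pnum * ∏ w' ∈ S.erase w, mShift K w' b := by
    rw [key]
    exact dvd_mul_of_dvd_right
      (hB.trans (Finset.dvd_prod_of_mem (fun w => mShift K w b) hp)) f
  have hrest : d' ∣ ∑ w ∈ S.erase p,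
      a w * mShift K w pnum * ∏ w' ∈ S.erase w, mShift K w' b := by
    refine Finset.dvd_sum fun w hw => ?_
    obtain ⟨hwp, hwS⟩ := Finset.mem_erase.mp hw
    have hpmem : p ∈ S.erase w := Finset.mem_erase.mpr ⟨fun h => hwp h.symm, hp⟩
    exact (hB.trans
      (Finset.dvd_prod_of_mem (fun w' => mShift K w' b) hpmem)).mul_left _
  have hgp : d' ∣ a p * mShift K p pnum * ∏ w' ∈ S.erase p, mShift K w' b := by
    have hsplit : a p * mShift K p pnum * ∏ w' ∈ S.erase p, mShift K w' b
        = (∑ w ∈ S, a w * mShift K w pnum * ∏ w' ∈ S.erase w, mShift K w' b)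
          - ∑ w ∈ S.erase p, a w * mShift K w pnum * ∏ w' ∈ S.erase w, mShift K w' b := by
      rw [← Finset.add_sum_erase S _ hp]
      ring
    rw [hsplit]
    exact dvd_sub hgS hrest
  rcases hd'p.dvd_mul.mp hgp with h | h
  · rcases hd'p.dvd_mul.mp h with h' | h'
    · -- d' ∣ a p : contradiction with aperiodicity of d
      obtain ⟨c, rfl⟩ := hconst
      have hc0 : c ≠ 0 := by
        rintro rfl
        exact ha p hp (by rw [hfact]; simp)
      have hCu : IsUnit (C c : MvPolynomial (Fin r) K) :=
        (isUnit_iff_ne_zero.mpr hc0).map (C : K →+* MvPolynomial (Fin r) K)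
      have hdu : d' ∣ up' := (hCu.dvd_mul_right).mp (hfact ▸ h')
      have hinf := hup' d' hd'irr hdu
      rw [hd'def, mSpread_mShift] at hinf
      exact hinf hdfin
    · -- d' ∣ σ_p pnum : contradiction with coprimality
      have h1 := map_dvd (mShift K (-p)) h'
      rw [hd'def, mShift_comp, mShift_comp,
        show -p + (p - m) = -m by ring,
        show -p + p = (0 : Fin r → ℤ) by ring, mShift_zero] at h1
      have h2 := map_dvd (mShift K (-m)) hm
      rw [mShift_cancel] at h2
      exact hdirr.not_isUnit ((isUnit_mShift_iff (-m)).mp (hrel h1 h2))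
  · -- d' divides some other shifted denominator : contradiction
    obtain ⟨w', hw', hdvd⟩ := (hd'p.dvd_finset_prod_iff _).mp h
    obtain ⟨hw'p, hw'S⟩ := Finset.mem_erase.mp hw'
    exact hA w' hw'S hw'p hdvd
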